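/- Let W be the static response matrix of a spring network in ℝ^d (d = 2 or 3) with n terminal nodes at positions x_1,…,x_n. Then W is a real symmetric positive semidefinite nd×nd matrix, and every column of W, regarded as a system of forces f_1,…,f_n ∈ ℝ^d supported at the points x_1,…,x_n, is a balanced system of forces. -/

import Mathlib

open scoped BigOperators
open Matrix

noncomputable section

/-- The Moore–Penrose pseudoinverse of a real square matrix, characterized by the
four Penrose conditions (it exists and is unique for every real matrix). -/
noncomputable def mpinv {n : Type*} [Fintype n] [DecidableEq n]
    (A : Matrix n n ℝ) : Matrix n n ℝ :=
  @dite _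
    (∃ X : Matrix n n ℝ,
      A * X * A = A ∧ X * A * X = X ∧ (A * X)ᵀ = A * X ∧ (X * A)ᵀ = X * A)
    (Classical.propDecidable _) (fun h => h.choose) (fun _ => 0)

/-- Euclidean norm of a vector in `Fin d → ℝ`. -/
noncomputable def enorm {d : ℕ} (v : Fin d → ℝ) : ℝ := Real.sqrt (∑ a, v a ^ 2)

/-- Unit vector pointing from `p` towards `q`. -/
noncomputable def unitDir {d : ℕ} (p q : Fin d → ℝ) : Fin d → ℝ :=
  fun a => (_root_.enorm (q - p))⁻¹ * (q a - p a)

/-- Stiffness matrix of a spring network with node positions `x` and spring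
constants `k`: the `d × d` off-diagonal block coupling nodes `i ≠ j` is
`-k i j • n_{ij} n_{ij}ᵀ` and the `i`-th diagonal block is
`∑ j ≠ i, k i j • n_{ij} n_{ij}ᵀ`. -/
noncomputable def stiffness {d : ℕ} {ι : Type*} [Fintype ι] [DecidableEq ι]
    (x : ι → Fin d → ℝ) (k : ι → ι → ℝ) :
    Matrix (ι × Fin d) (ι × Fin d) ℝ :=
  Matrix.of fun p q =>
    if p.1 = q.1 then
      ∑ j ∈ Finset.univ.filter (fun j => j ≠ p.1),
        k p.1 j * (unitDir (x p.1) (x j) p.2 * unitDir (x p.1) (x j) q.2)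
    else
      -(k p.1 q.1 * (unitDir (x p.1) (x q.1) p.2 * unitDir (x p.1) (x q.1) q.2))

/-- `(x, k)` is a spring network: nodes are at distinct positions and the spring
constants are symmetric and nonnegative. -/
def IsSpringNetwork {d : ℕ} {ι : Type*} (x : ι → Fin d → ℝ) (k : ι → ι → ℝ) : Prop :=
  Function.Injective x ∧ (∀ i j, k i j = k j i) ∧ (∀ i j, 0 ≤ k i j)

/-- The block of a matrix indexed by `(nodes × Fin d)` selected by the node
maps `f` and `g`. -/
def blk {d : ℕ} {ι κ₁ κ₂ : Type*} (K : Matrix (ι × Fin d) (ι × Fin d) ℝ)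
    (f : κ₁ → ι) (g : κ₂ → ι) : Matrix (κ₁ × Fin d) (κ₂ × Fin d) ℝ :=
  K.submatrix (Prod.map f id) (Prod.map g id)

/-- Generalized Schur complement `K_BB - K_BI K_II† K_IB` eliminating the
interior nodes `I`. -/
noncomputable def schurResp {d : ℕ} {B I : Type*} [Fintype B] [Fintype I]
    [DecidableEq B] [DecidableEq I]
    (K : Matrix ((B ⊕ I) × Fin d) ((B ⊕ I) × Fin d) ℝ) :
    Matrix (B × Fin d) (B × Fin d) ℝ :=
  blk K Sum.inl Sum.inl -
    blk K Sum.inl Sum.inr * mpinv (blk K Sum.inr Sum.inr) * blk K Sum.inr Sum.inl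

/-- Static response matrix at the terminals `B` of the spring network `(x, k)`
with interior nodes `I`. -/
noncomputable def staticResponse {d : ℕ} {B I : Type*} [Fintype B] [Fintype I]
    [DecidableEq B] [DecidableEq I]
    (x : (B ⊕ I) → Fin d → ℝ) (k : (B ⊕ I) → (B ⊕ I) → ℝ) :
    Matrix (B × Fin d) (B × Fin d) ℝ :=
  schurResp (stiffness x k)

/-- Balanced system of forces `f` supported at the points `x`: the total force
vanishes and the total torque vanishes (the torque being recorded as the
antisymmetric matrix `x_i ∧ f_i`, which for `d = 2` is equivalent to the scalar
wedge `u ∧ v = u 0 * v 1 - u 1 * v 0` and for `d = 3` to the cross product). -/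
def IsBalanced {d : ℕ} {ι : Type*} [Fintype ι]
    (x f : ι → Fin d → ℝ) : Prop :=
  (∀ a, ∑ i, f i a = 0) ∧ ∀ a b, ∑ i, (x i a * f i b - x i b * f i a) = 0

/-- Planar wedge product. -/
def wedge2 (u v : Fin 2 → ℝ) : ℝ := u 0 * v 1 - u 1 * v 0

/-- Cross product in `ℝ³`. -/
def cross3 (u v : Fin 3 → ℝ) : Fin 3 → ℝ :=
  ![u 1 * v 2 - u 2 * v 1, u 2 * v 0 - u 0 * v 2, u 0 * v 1 - u 1 * v 0]

/-- The `ε`-neighborhood `{y | dist (y, C) ≤ ε}` of a set `C` (for a closed set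
`C`, membership is equivalent to being within Euclidean distance `ε` of some
point of `C`). -/
def epsNbhd {d : ℕ} (C : Set (Fin d → ℝ)) (ε : ℝ) : Set (Fin d → ℝ) :=
  {y | ∃ z ∈ C, _root_.enorm (y - z) ≤ ε}

/-- Combine terminal and interior displacements into a displacement of all
nodes. -/
def glue {d : ℕ} {B I : Type*} (uB : B × Fin d → ℝ) (uI : I × Fin d → ℝ) :
    (B ⊕ I) × Fin d → ℝ :=
  fun p => Sum.elim (fun b => uB (b, p.2)) (fun i => uI (i, p.2)) p.1

/-- The reduced stiffness matrix `K̃` at the nodes `B ⊕ J` of a spring–mass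
network with massless interior nodes `L`, obtained by eliminating `L`. -/
noncomputable def dynKtilde {d : ℕ} {B J L : Type*} [Fintype B] [Fintype J] [Fintype L]
    [DecidableEq B] [DecidableEq J] [DecidableEq L]
    (x : ((B ⊕ J) ⊕ L) → Fin d → ℝ) (k : ((B ⊕ J) ⊕ L) → ((B ⊕ J) ⊕ L) → ℝ) :
    Matrix ((B ⊕ J) × Fin d) ((B ⊕ J) × Fin d) ℝ :=
  schurResp (stiffness x k)

/-- The diagonal mass matrix `M_JJ` of the interior nodes with mass. -/
noncomputable def massJJ {d : ℕ} {B J L : Type*} [Fintype J] [DecidableEq J]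
    (m : (B ⊕ J) ⊕ L → ℝ) : Matrix (J × Fin d) (J × Fin d) ℝ :=
  Matrix.diagonal fun p => m (Sum.inl (Sum.inr p.1))

/-- The diagonal mass matrix `M_BB` of the terminal nodes. -/
noncomputable def massBB {d : ℕ} {B J L : Type*} [Fintype B] [DecidableEq B]
    (m : (B ⊕ J) ⊕ L → ℝ) : Matrix (B × Fin d) (B × Fin d) ℝ :=
  Matrix.diagonal fun p => m (Sum.inl (Sum.inl p.1))

/-- Dynamic response function
`W(ω) = K̃_BB - ω² M_BB - K̃_BJ (K̃_JJ - ω² M_JJ)⁻¹ K̃_JB` of a spring–mass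
network with terminals `B`, interior nodes `J` carrying the masses `m` and
massless interior nodes `L`. -/
noncomputable def dynResponse {d : ℕ} {B J L : Type*} [Fintype B] [Fintype J] [Fintype L]
    [DecidableEq B] [DecidableEq J] [DecidableEq L]
    (x : ((B ⊕ J) ⊕ L) → Fin d → ℝ) (k : ((B ⊕ J) ⊕ L) → ((B ⊕ J) ⊕ L) → ℝ)
    (m : (B ⊕ J) ⊕ L → ℝ) (ω : ℝ) : Matrix (B × Fin d) (B × Fin d) ℝ :=
  blk (dynKtilde x k) Sum.inl Sum.inl - ω ^ 2 • massBB m -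
    blk (dynKtilde x k) Sum.inl Sum.inr *
      (blk (dynKtilde x k) Sum.inr Sum.inr - ω ^ 2 • massJJ m)⁻¹ *
      blk (dynKtilde x k) Sum.inr Sum.inl

set_option linter.unusedSectionVars false

section MP

variable {m : Type*} [Fintype m] [DecidableEq m]

/-- `X` satisfies the four Penrose conditions for `A`. -/
def IsPInv (A X : Matrix m m ℝ) : Prop :=
  A * X * A = A ∧ X * A * X = X ∧ (A * X)ᵀ = A * X ∧ (X * A)ᵀ = X * A

lemma IsPInv.unique {A X Y : Matrix m m ℝ} (hX : IsPInv A X) (hY : IsPInv A Y) : X = Y := by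
  obtain ⟨hX1, hX2, hX3, hX4⟩ := hX
  obtain ⟨hY1, hY2, hY3, hY4⟩ := hY
  have hAX : A * X = A * Y := by
    calc A * X = (A * X)ᵀ := hX3.symm
      _ = Xᵀ * Aᵀ := Matrix.transpose_mul _ _
      _ = Xᵀ * (A * Y * A)ᵀ := by rw [hY1]
      _ = Xᵀ * (Aᵀ * (A * Y)ᵀ) := by rw [Matrix.transpose_mul (A * Y) A]
      _ = Xᵀ * (Aᵀ * (A * Y)) := by rw [hY3]
      _ = (Xᵀ * Aᵀ) * (A * Y) := by rw [Matrix.mul_assoc]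
      _ = (A * X)ᵀ * (A * Y) := by rw [Matrix.transpose_mul]
      _ = (A * X) * (A * Y) := by rw [hX3]
      _ = (A * X * A) * Y := by simp only [Matrix.mul_assoc]
      _ = A * Y := by rw [hX1]
  have hXA : X * A = Y * A := by
    calc X * A = (X * A)ᵀ := hX4.symm
      _ = Aᵀ * Xᵀ := Matrix.transpose_mul _ _
      _ = (A * Y * A)ᵀ * Xᵀ := by rw [hY1]
      _ = ((Y * A)ᵀ * Aᵀ) * Xᵀ := by rw [show A * Y * A = A * (Y * A) by rw [Matrix.mul_assoc],
            Matrix.transpose_mul A (Y * A)]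
      _ = ((Y * A) * Aᵀ) * Xᵀ := by rw [hY4]
      _ = (Y * A) * (Aᵀ * Xᵀ) := by rw [Matrix.mul_assoc]
      _ = (Y * A) * (X * A)ᵀ := by rw [Matrix.transpose_mul]
      _ = (Y * A) * (X * A) := by rw [hX4]
      _ = Y * (A * X * A) := by simp only [Matrix.mul_assoc]
      _ = Y * A := by rw [hX1]
  calc X = X * A * X := hX2.symm
    _ = X * (A * Y) := by rw [Matrix.mul_assoc, hAX]
    _ = (X * A) * Y := by rw [Matrix.mul_assoc]
    _ = (Y * A) * Y := by rw [hXA]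
    _ = Y := by rw [Matrix.mul_assoc]; rw [← Matrix.mul_assoc]; exact hY2

lemma conjTranspose_eq_transpose_real {k l : Type*} (A : Matrix k l ℝ) : Aᴴ = Aᵀ := by
  ext i j; simp [Matrix.conjTranspose_apply]

lemma exists_isPInv_of_symm {A : Matrix m m ℝ} (hA : Aᵀ = A) : ∃ X, IsPInv A X := by
  have hH : A.IsHermitian := by
    rw [Matrix.IsHermitian, conjTranspose_eq_transpose_real, hA]
  set ev : m → ℝ := hH.eigenvalues with hev
  set U : Matrix m m ℝ := (Matrix.IsHermitian.eigenvectorUnitary hH : Matrix m m ℝ) with hU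
  have hU1 : star U * U = 1 :=
    Matrix.mem_unitaryGroup_iff'.mp (Matrix.IsHermitian.eigenvectorUnitary hH).2
  have hU2 : U * star U = 1 :=
    Matrix.mem_unitaryGroup_iff.mp (Matrix.IsHermitian.eigenvectorUnitary hH).2
  have hspec : A = U * Matrix.diagonal ev * star U := by
    have h := hH.spectral_theorem
    simpa using h
  have key : ∀ M N : Matrix m m ℝ,
      (U * M * star U) * (U * N * star U) = U * (M * N) * star U := by
    intro M N
    calc (U * M * star U) * (U * N * star U)
        = U * (M * ((star U * U) * (N * star U))) := by simp only [Matrix.mul_assoc]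
      _ = U * (M * N) * star U := by rw [hU1]; simp only [Matrix.one_mul, Matrix.mul_assoc]
  have hsymm : ∀ c : m → ℝ, (U * Matrix.diagonal c * star U)ᵀ = U * Matrix.diagonal c * star U := by
    intro c
    rw [Matrix.star_eq_conjTranspose, conjTranspose_eq_transpose_real,
      Matrix.transpose_mul, Matrix.transpose_mul, Matrix.transpose_transpose,
      Matrix.diagonal_transpose]
    simp only [Matrix.mul_assoc]
  have hDDD : Matrix.diagonal ev * Matrix.diagonal (fun i => (ev i)⁻¹) * Matrix.diagonal ev
      = Matrix.diagonal ev := by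
    rw [Matrix.diagonal_mul_diagonal, Matrix.diagonal_mul_diagonal]
    have hfun : (fun i => ev i * (ev i)⁻¹ * ev i) = ev := by
      funext i
      rcases eq_or_ne (ev i) 0 with h | h
      · rw [h]; simp
      · field_simp
    rw [hfun]
  have hD'DD' : Matrix.diagonal (fun i => (ev i)⁻¹) * Matrix.diagonal ev
      * Matrix.diagonal (fun i => (ev i)⁻¹) = Matrix.diagonal (fun i => (ev i)⁻¹) := by
    rw [Matrix.diagonal_mul_diagonal, Matrix.diagonal_mul_diagonal]
    have hfun : (fun i => (ev i)⁻¹ * ev i * (ev i)⁻¹) = fun i => (ev i)⁻¹ := by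
      funext i
      rcases eq_or_ne (ev i) 0 with h | h
      · rw [h]; simp
      · field_simp
    rw [hfun]
  refine ⟨U * Matrix.diagonal (fun i => (ev i)⁻¹) * star U, ?_, ?_, ?_, ?_⟩
  · rw [hspec, key, key, Matrix.mul_assoc U, hDDD, Matrix.mul_assoc]
  · rw [hspec, key, key, Matrix.mul_assoc U, hD'DD', Matrix.mul_assoc]
  · rw [hspec, key, Matrix.diagonal_mul_diagonal]; exact hsymm _
  · rw [hspec, key, Matrix.diagonal_mul_diagonal]; exact hsymm _

lemma mpinv_isPInv {A : Matrix m m ℝ} (hA : Aᵀ = A) : IsPInv A (mpinv A) := by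
  obtain ⟨X, hX⟩ := exists_isPInv_of_symm hA
  have h : ∃ X : Matrix m m ℝ,
      A * X * A = A ∧ X * A * X = X ∧ (A * X)ᵀ = A * X ∧ (X * A)ᵀ = X * A := ⟨X, hX⟩
  unfold mpinv
  rw [dif_pos h]
  exact h.choose_spec

lemma IsPInv.transpose {A X : Matrix m m ℝ} (h : IsPInv A X) : IsPInv Aᵀ Xᵀ := by
  obtain ⟨h1, h2, h3, h4⟩ := h
  refine ⟨?_, ?_, ?_, ?_⟩
  · rw [← Matrix.transpose_mul, ← Matrix.transpose_mul, ← Matrix.mul_assoc, h1]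
  · rw [← Matrix.transpose_mul, ← Matrix.transpose_mul, ← Matrix.mul_assoc, h2]
  · rw [← Matrix.transpose_mul, Matrix.transpose_transpose, h4]
  · rw [← Matrix.transpose_mul, Matrix.transpose_transpose, h3]

lemma mpinv_symm {A : Matrix m m ℝ} (hA : Aᵀ = A) : (mpinv A)ᵀ = mpinv A := by
  have h1 := (mpinv_isPInv hA).transpose
  rw [hA] at h1
  exact h1.unique (mpinv_isPInv hA)

end MP
section Spring

set_option linter.unusedSectionVars false

variable {d : ℕ} {ι : Type*} [Fintype ι] [DecidableEq ι]

/-- Elementary edge vector of the edge `(i,j)`. -/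
def edir (x : ι → Fin d → ℝ) (i j : ι) : ι × Fin d → ℝ :=
  fun p => ((if p.1 = i then (1:ℝ) else 0) - (if p.1 = j then 1 else 0)) * unitDir (x i) (x j) p.2

lemma unitDir_self (p : Fin d → ℝ) (a : Fin d) : unitDir p p a = 0 := by
  simp [unitDir]

lemma enorm_sub_comm (p q : Fin d → ℝ) : _root_.enorm (p - q) = _root_.enorm (q - p) := by
  unfold _root_.enorm
  congr 1
  apply Finset.sum_congr rfl
  intro a _
  simp only [Pi.sub_apply]
  ring

lemma unitDir_symm (p q : Fin d → ℝ) (a : Fin d) : unitDir q p a = -unitDir p q a := by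
  unfold unitDir
  rw [enorm_sub_comm]
  ring

lemma stiffness_eq (x : ι → Fin d → ℝ) (k : ι → ι → ℝ) (hk : ∀ i j, k i j = k j i) :
    stiffness x k = ∑ i : ι, ∑ j : ι,
      (k i j / 2) • Matrix.vecMulVec (edir x i j) (edir x i j) := by
  ext ⟨i, a⟩ ⟨j, b⟩
  simp only [Matrix.sum_apply, Matrix.smul_apply, Matrix.vecMulVec_apply, smul_eq_mul]
  have expand : ∀ i' j' : ι,
      k i' j' / 2 * (edir x i' j' (i,a) * edir x i' j' (j,b))
      = (if i = i' then (1:ℝ) else 0) * ((if j = i' then (1:ℝ) else 0)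
          * (k i' j' / 2 * (unitDir (x i') (x j') a * unitDir (x i') (x j') b)))
        - (if i = i' then (1:ℝ) else 0) * ((if j = j' then (1:ℝ) else 0)
          * (k i' j' / 2 * (unitDir (x i') (x j') a * unitDir (x i') (x j') b)))
        - (if i = j' then (1:ℝ) else 0) * ((if j = i' then (1:ℝ) else 0)
          * (k i' j' / 2 * (unitDir (x i') (x j') a * unitDir (x i') (x j') b)))
        + (if i = j' then (1:ℝ) else 0) * ((if j = j' then (1:ℝ) else 0)
          * (k i' j' / 2 * (unitDir (x i') (x j') a * unitDir (x i') (x j') b))) := by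
    intro i' j'
    simp only [edir]
    ring
  simp only [expand, Finset.sum_add_distrib, Finset.sum_sub_distrib]
  simp only [ite_mul, one_mul, zero_mul, Finset.sum_ite_irrel, Finset.sum_const_zero,
    Fintype.sum_ite_eq]
  rcases eq_or_ne i j with hij | hij
  · subst hij
    simp only [stiffness, Matrix.of_apply, if_pos rfl, unitDir_self, mul_zero, zero_mul,
      sub_zero]
    rw [Finset.sum_filter_of_ne
      (fun j' _ h => by rintro rfl; exact h (by simp [unitDir_self]))]
    have hswap : ∀ j' : ι,
        k j' i / 2 * (unitDir (x j') (x i) a * unitDir (x j') (x i) b)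
        = k i j' / 2 * (unitDir (x i) (x j') a * unitDir (x i) (x j') b) := by
      intro j'
      rw [hk j' i, unitDir_symm (x i) (x j') a, unitDir_symm (x i) (x j') b]
      ring
    rw [Finset.sum_congr rfl fun j' _ => hswap j']
    simp only [if_true]
    rw [← Finset.sum_add_distrib]
    apply Finset.sum_congr rfl
    intro j' _
    ring
  · simp only [stiffness, Matrix.of_apply, if_neg hij, if_neg (Ne.symm hij)]
    rw [hk j i, unitDir_symm (x i) (x j) a, unitDir_symm (x i) (x j) b]
    ring

end Spring

section SumHelpers

variable {κ P : Type*} [Fintype P]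

lemma sum_mulVec' (s : Finset κ) (f : κ → Matrix P P ℝ) (u : P → ℝ) :
    (∑ e ∈ s, f e) *ᵥ u = ∑ e ∈ s, f e *ᵥ u := by
  induction s using Finset.cons_induction with
  | empty => simp
  | cons a s ha ih => simp [Finset.sum_cons, Matrix.add_mulVec, ih]

lemma dotProduct_sum' (s : Finset κ) (w : κ → P → ℝ) (u : P → ℝ) :
    u ⬝ᵥ (∑ e ∈ s, w e) = ∑ e ∈ s, u ⬝ᵥ w e := by
  induction s using Finset.cons_induction with
  | empty => simp
  | cons a s ha ih => simp [Finset.sum_cons, dotProduct_add, ih]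

lemma vecMulVec_mulVec' (v w u : P → ℝ) :
    Matrix.vecMulVec v w *ᵥ u = (w ⬝ᵥ u) • v := by
  funext p
  simp only [Matrix.mulVec, dotProduct, Matrix.vecMulVec_apply, Pi.smul_apply,
    smul_eq_mul, Finset.sum_mul]
  apply Finset.sum_congr rfl
  intro q _
  ring

lemma dot_vecMulVec (v u : P → ℝ) :
    u ⬝ᵥ (Matrix.vecMulVec v v *ᵥ u) = (v ⬝ᵥ u) ^ 2 := by
  rw [vecMulVec_mulVec', dotProduct_smul, smul_eq_mul, dotProduct_comm u v, sq]

end SumHelpers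

section Spring2

set_option linter.unusedSectionVars false

variable {d : ℕ} {ι : Type*} [Fintype ι] [DecidableEq ι]

lemma stiffness_transpose (x : ι → Fin d → ℝ) (k : ι → ι → ℝ) (hk : ∀ i j, k i j = k j i) :
    (stiffness x k)ᵀ = stiffness x k := by
  rw [stiffness_eq x k hk]
  ext p q
  simp only [Matrix.transpose_apply, Matrix.sum_apply, Matrix.smul_apply,
    Matrix.vecMulVec_apply, smul_eq_mul]
  apply Finset.sum_congr rfl; intro i _
  apply Finset.sum_congr rfl; intro j _
  ring

lemma stiffness_isHermitian (x : ι → Fin d → ℝ) (k : ι → ι → ℝ) (hk : ∀ i j, k i j = k j i) :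
    (stiffness x k).IsHermitian := by
  rw [Matrix.IsHermitian, conjTranspose_eq_transpose_real, stiffness_transpose x k hk]

lemma stiffness_posSemidef (x : ι → Fin d → ℝ) (k : ι → ι → ℝ)
    (hk : ∀ i j, k i j = k j i) (hk0 : ∀ i j, 0 ≤ k i j) :
    (stiffness x k).PosSemidef := by
  refine Matrix.PosSemidef.of_dotProduct_mulVec_nonneg (stiffness_isHermitian x k hk) ?_
  intro u
  have hstar : star u = u := by funext p; simp
  rw [hstar, stiffness_eq x k hk]
  have hrw : ∀ i : ι, (∑ j : ι, (k i j / 2) • Matrix.vecMulVec (edir x i j) (edir x i j)) *ᵥ u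
      = ∑ j : ι, (k i j / 2) • (Matrix.vecMulVec (edir x i j) (edir x i j) *ᵥ u) := by
    intro i
    rw [sum_mulVec']
    apply Finset.sum_congr rfl
    intro j _
    rw [Matrix.smul_mulVec]
  rw [sum_mulVec', Finset.sum_congr rfl fun i _ => hrw i, dotProduct_sum']
  apply Finset.sum_nonneg
  intro i _
  rw [dotProduct_sum']
  apply Finset.sum_nonneg
  intro j _
  rw [dotProduct_smul, smul_eq_mul, dot_vecMulVec]
  have := hk0 i j
  positivity

lemma stiffness_mulVec_zero (x : ι → Fin d → ℝ) (k : ι → ι → ℝ)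
    (hk : ∀ i j, k i j = k j i) (u : ι × Fin d → ℝ)
    (h : ∀ i j : ι, ∑ b : Fin d, unitDir (x i) (x j) b * (u (i, b) - u (j, b)) = 0) :
    stiffness x k *ᵥ u = 0 := by
  have hdot : ∀ i j : ι, edir x i j ⬝ᵥ u = 0 := by
    intro i j
    calc edir x i j ⬝ᵥ u
        = ∑ s : ι, ∑ b : Fin d,
            ((if s = i then (1:ℝ) else 0) - if s = j then 1 else 0)
              * unitDir (x i) (x j) b * u (s, b) := by
          rw [dotProduct, Fintype.sum_prod_type]
          rfl
      _ = ∑ b : Fin d, unitDir (x i) (x j) b * u (i, b)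
          - ∑ b : Fin d, unitDir (x i) (x j) b * u (j, b) := by
          simp only [sub_mul, ite_mul, one_mul, zero_mul, Finset.sum_sub_distrib]
          congr 1 <;> rw [Finset.sum_comm] <;> simp only [Fintype.sum_ite_eq']
      _ = ∑ b : Fin d, unitDir (x i) (x j) b * (u (i, b) - u (j, b)) := by
          rw [← Finset.sum_sub_distrib]
          apply Finset.sum_congr rfl
          intro b _
          ring
      _ = 0 := h i j
  rw [stiffness_eq x k hk, sum_mulVec']
  have : ∀ i : ι, (∑ j : ι, (k i j / 2) • Matrix.vecMulVec (edir x i j) (edir x i j)) *ᵥ u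
      = 0 := by
    intro i
    rw [sum_mulVec']
    apply Finset.sum_eq_zero
    intro j _
    rw [Matrix.smul_mulVec, vecMulVec_mulVec', hdot i j]
    simp
  simp only [this]
  simp

end Spring2
section Blocks

set_option linter.unusedSectionVars false

variable {d : ℕ} {B I : Type*} [Fintype B] [Fintype I] [DecidableEq B] [DecidableEq I]

lemma mulVec_glue_inl (K : Matrix ((B ⊕ I) × Fin d) ((B ⊕ I) × Fin d) ℝ)
    (uB : B × Fin d → ℝ) (uI : I × Fin d → ℝ) (p : B × Fin d) :
    (K *ᵥ glue uB uI) (Sum.inl p.1, p.2)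
      = (blk K Sum.inl Sum.inl *ᵥ uB) p + (blk K Sum.inl Sum.inr *ᵥ uI) p := by
  simp only [Matrix.mulVec, dotProduct, blk, Matrix.submatrix_apply, Prod.map,
    Fintype.sum_prod_type, Fintype.sum_sum_type, glue, Sum.elim_inl, Sum.elim_inr, id_eq]

lemma mulVec_glue_inr (K : Matrix ((B ⊕ I) × Fin d) ((B ⊕ I) × Fin d) ℝ)
    (uB : B × Fin d → ℝ) (uI : I × Fin d → ℝ) (p : I × Fin d) :
    (K *ᵥ glue uB uI) (Sum.inr p.1, p.2)
      = (blk K Sum.inr Sum.inl *ᵥ uB) p + (blk K Sum.inr Sum.inr *ᵥ uI) p := by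
  simp only [Matrix.mulVec, dotProduct, blk, Matrix.submatrix_apply, Prod.map,
    Fintype.sum_prod_type, Fintype.sum_sum_type, glue, Sum.elim_inl, Sum.elim_inr, id_eq]

lemma glue_dotProduct (uB : B × Fin d → ℝ) (uI : I × Fin d → ℝ)
    (w : (B ⊕ I) × Fin d → ℝ) :
    glue uB uI ⬝ᵥ w = uB ⬝ᵥ (fun p : B × Fin d => w (Sum.inl p.1, p.2))
      + uI ⬝ᵥ (fun p : I × Fin d => w (Sum.inr p.1, p.2)) := by
  simp only [dotProduct, Fintype.sum_prod_type, Fintype.sum_sum_type, glue,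
    Sum.elim_inl, Sum.elim_inr]

lemma glue_restrict (w : (B ⊕ I) × Fin d → ℝ) :
    glue (fun p : B × Fin d => w (Sum.inl p.1, p.2))
      (fun p : I × Fin d => w (Sum.inr p.1, p.2)) = w := by
  funext ⟨s, c⟩
  cases s <;> rfl

end Blocks

/-- the static response matrix is real symmetric positive
semidefinite and each of its columns is a balanced system of forces supported
at the terminal positions. -/
theorem static_response_psd_balanced {d : ℕ} (hd : d = 2 ∨ d = 3) {n : ℕ}
    {I : Type*} [Fintype I] [DecidableEq I]
    (x : (Fin n ⊕ I) → Fin d → ℝ) (k : (Fin n ⊕ I) → (Fin n ⊕ I) → ℝ)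
    (hnet : IsSpringNetwork x k) :
    (staticResponse x k)ᵀ = staticResponse x k ∧
    (staticResponse x k).PosSemidef ∧
    ∀ c : Fin n × Fin d,
      IsBalanced (fun i => x (Sum.inl i))
        (fun i a => staticResponse x k (i, a) c) := by
  obtain ⟨hinj, hksym, hk0⟩ := hnet
  set K : Matrix ((Fin n ⊕ I) × Fin d) ((Fin n ⊕ I) × Fin d) ℝ := stiffness x k with hK
  have hKt : Kᵀ = K := stiffness_transpose x k hksym
  have hKpsd : K.PosSemidef := stiffness_posSemidef x k hksym hk0
  set A := blk K Sum.inl Sum.inl with hA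
  set Bm := blk K Sum.inl Sum.inr with hBm
  set C := blk K Sum.inr Sum.inl with hC
  set Dm := blk K Sum.inr Sum.inr with hDm
  have hAt : Aᵀ = A := by
    rw [hA]; show (K.submatrix _ _)ᵀ = _
    rw [Matrix.transpose_submatrix, hKt]; rfl
  have hBt : Bmᵀ = C := by
    rw [hBm, hC]; show (K.submatrix _ _)ᵀ = _
    rw [Matrix.transpose_submatrix, hKt]; rfl
  have hDt : Dmᵀ = Dm := by
    rw [hDm]; show (K.submatrix _ _)ᵀ = _
    rw [Matrix.transpose_submatrix, hKt]; rfl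
  have hCt : Cᵀ = Bm := by rw [← hBt, Matrix.transpose_transpose]
  set X := mpinv Dm with hXdef
  have hXp : IsPInv Dm X := mpinv_isPInv hDt
  have hXt : Xᵀ = X := mpinv_symm hDt
  have hW : staticResponse x k = A - Bm * X * C := rfl
  have hWt : (staticResponse x k)ᵀ = staticResponse x k := by
    rw [hW, Matrix.transpose_sub, hAt, Matrix.transpose_mul, Matrix.transpose_mul, hXt,
      hBt, hCt, ← Matrix.mul_assoc]
  -- kernel inclusion
  have hker : ∀ v : I × Fin d → ℝ, Dm *ᵥ v = 0 → Bm *ᵥ v = 0 := by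
    intro v hv
    have hsg : star (glue (0 : Fin n × Fin d → ℝ) v) = glue 0 v := by funext p; simp
    have hq : star (glue (0 : Fin n × Fin d → ℝ) v) ⬝ᵥ (K *ᵥ glue 0 v) = 0 := by
      rw [hsg, glue_dotProduct, zero_dotProduct, zero_add]
      have h2 : (fun p : I × Fin d => (K *ᵥ glue (0 : Fin n × Fin d → ℝ) v) (Sum.inr p.1, p.2))
          = C *ᵥ (0 : Fin n × Fin d → ℝ) + Dm *ᵥ v := by
        funext p; rw [mulVec_glue_inr]; rfl
      rw [h2, Matrix.mulVec_zero, zero_add, hv, dotProduct_zero]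
    have hK0 : K *ᵥ glue 0 v = 0 := (hKpsd.dotProduct_mulVec_zero_iff _).mp hq
    funext p
    have h3 := congrFun hK0 (Sum.inl p.1, p.2)
    rw [mulVec_glue_inl] at h3
    simpa [Matrix.mulVec_zero] using h3
  have hBXD : ∀ v : I × Fin d → ℝ, Bm *ᵥ (X *ᵥ (Dm *ᵥ v)) = Bm *ᵥ v := by
    intro v
    have h1 : Dm *ᵥ (v - X *ᵥ (Dm *ᵥ v)) = 0 := by
      rw [Matrix.mulVec_sub, Matrix.mulVec_mulVec, Matrix.mulVec_mulVec, hXp.1, sub_self]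
    have h2 := hker _ h1
    rw [Matrix.mulVec_sub] at h2
    exact (sub_eq_zero.mp h2).symm
  -- W annihilates restrictions of vectors annihilated by K
  have hWzero : ∀ r : ((Fin n ⊕ I) × Fin d) → ℝ, K *ᵥ r = 0 →
      staticResponse x k *ᵥ (fun p : Fin n × Fin d => r (Sum.inl p.1, p.2)) = 0 := by
    intro r hr
    set rB := fun p : Fin n × Fin d => r (Sum.inl p.1, p.2) with hrB
    set rI := fun p : I × Fin d => r (Sum.inr p.1, p.2) with hrI
    have hglue : K *ᵥ glue rB rI = 0 := by rw [glue_restrict]; exact hr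
    have hBeq : A *ᵥ rB + Bm *ᵥ rI = 0 := by
      funext p
      have := congrFun hglue (Sum.inl p.1, p.2)
      rw [mulVec_glue_inl] at this
      exact this
    have hIeq : C *ᵥ rB + Dm *ᵥ rI = 0 := by
      funext p
      have := congrFun hglue (Sum.inr p.1, p.2)
      rw [mulVec_glue_inr] at this
      exact this
    have h4 : C *ᵥ rB = -(Dm *ᵥ rI) := eq_neg_of_add_eq_zero_left hIeq
    rw [hW, Matrix.sub_mulVec]
    have h3 : (Bm * X * C) *ᵥ rB = Bm *ᵥ (X *ᵥ (C *ᵥ rB)) := by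
      rw [Matrix.mulVec_mulVec, Matrix.mulVec_mulVec]
    rw [h3, h4, Matrix.mulVec_neg, Matrix.mulVec_neg, hBXD, sub_neg_eq_add, hBeq]
  -- positive semidefiniteness
  have hswap : ∀ (M : Matrix (I × Fin d) (I × Fin d) ℝ), Mᵀ = M →
      ∀ a b : I × Fin d → ℝ, (M *ᵥ a) ⬝ᵥ b = a ⬝ᵥ (M *ᵥ b) := by
    intro M hM a b
    conv_rhs => rw [Matrix.dotProduct_mulVec, ← Matrix.mulVec_transpose, hM]
  have hpsd : (staticResponse x k).PosSemidef := by
    refine Matrix.PosSemidef.of_dotProduct_mulVec_nonneg ?_ ?_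
    · rw [Matrix.IsHermitian, conjTranspose_eq_transpose_real, hWt]
    · intro y
      have hsy : star y = y := by funext p; simp
      rw [hsy]
      set w := C *ᵥ y with hw
      set v := -(X *ᵥ w) with hv
      have e1 : (fun p : Fin n × Fin d => (K *ᵥ glue y v) (Sum.inl p.1, p.2))
          = A *ᵥ y + Bm *ᵥ v := by funext p; rw [mulVec_glue_inl]; rfl
      have e2 : (fun p : I × Fin d => (K *ᵥ glue y v) (Sum.inr p.1, p.2))
          = C *ᵥ y + Dm *ᵥ v := by funext p; rw [mulVec_glue_inr]; rfl
      have hDXX : (X *ᵥ w) ⬝ᵥ (Dm *ᵥ (X *ᵥ w)) = (X *ᵥ w) ⬝ᵥ w := by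
        rw [hswap X hXt, Matrix.mulVec_mulVec, Matrix.mulVec_mulVec, hXp.2.1]
        exact (hswap X hXt w w).symm
      have hCyDv : v ⬝ᵥ (C *ᵥ y + Dm *ᵥ v) = 0 := by
        rw [hv, neg_dotProduct, Matrix.mulVec_neg, dotProduct_add,
          dotProduct_neg, hDXX]
        ring
      have hBv : y ⬝ᵥ (A *ᵥ y + Bm *ᵥ v) = y ⬝ᵥ (staticResponse x k *ᵥ y) := by
        have h5 : (Bm * X * C) *ᵥ y = Bm *ᵥ (X *ᵥ w) := by
          rw [hw, Matrix.mulVec_mulVec, Matrix.mulVec_mulVec]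
        rw [hW, Matrix.sub_mulVec, dotProduct_sub, dotProduct_add, hv,
          Matrix.mulVec_neg, dotProduct_neg, h5]
        ring
      have hq : y ⬝ᵥ (staticResponse x k *ᵥ y) = glue y v ⬝ᵥ (K *ᵥ glue y v) := by
        rw [glue_dotProduct, e1, e2, hCyDv, add_zero, hBv]
      rw [hq]
      have := hKpsd.dotProduct_mulVec_nonneg (glue y v)
      have hsg : star (glue y v) = glue y v := by funext p; simp
      rwa [hsg] at this
  refine ⟨hWt, hpsd, ?_⟩
  intro c
  have hWsym : ∀ p q, staticResponse x k p q = staticResponse x k q p := by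
    intro p q
    have h := congrFun (congrFun hWt q) p
    rw [Matrix.transpose_apply] at h
    exact h
  constructor
  · intro a
    have hKT : K *ᵥ (fun p : (Fin n ⊕ I) × Fin d => if p.2 = a then (1:ℝ) else 0) = 0 := by
      apply stiffness_mulVec_zero x k hksym
      intro i j
      simp
    have h0 := hWzero _ hKT
    have h1 := congrFun h0 c
    calc ∑ i : Fin n, staticResponse x k (i, a) c
        = ∑ i : Fin n, staticResponse x k c (i, a) := by
          exact Finset.sum_congr rfl fun i _ => hWsym (i, a) c
      _ = (staticResponse x k *ᵥ (fun p : Fin n × Fin d =>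
            if ((Sum.inl p.1 : Fin n ⊕ I), p.2).2 = a then (1:ℝ) else 0)) c := by
          simp only [Matrix.mulVec, dotProduct, Fintype.sum_prod_type, mul_ite,
            mul_one, mul_zero, Fintype.sum_ite_eq']
      _ = 0 := h1
  · intro a b
    have hKR : K *ᵥ (fun p : (Fin n ⊕ I) × Fin d =>
        x p.1 a * (if p.2 = b then (1:ℝ) else 0) - x p.1 b * (if p.2 = a then 1 else 0)) = 0 := by
      apply stiffness_mulVec_zero x k hksym
      intro i j
      simp only [mul_sub, sub_mul, mul_ite, ite_mul, mul_zero, zero_mul, mul_one, one_mul,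
        Finset.sum_sub_distrib, Fintype.sum_ite_eq']
      unfold unitDir
      ring
    have h0 := hWzero _ hKR
    have h1 := congrFun h0 c
    calc ∑ i : Fin n, (x (Sum.inl i) a * staticResponse x k (i, b) c
          - x (Sum.inl i) b * staticResponse x k (i, a) c)
        = ∑ i : Fin n, (staticResponse x k c (i, b) * x (Sum.inl i) a
          - staticResponse x k c (i, a) * x (Sum.inl i) b) := by
          apply Finset.sum_congr rfl
          intro i _
          rw [hWsym (i, b) c, hWsym (i, a) c]
          ring
      _ = (staticResponse x k *ᵥ (fun p : Fin n × Fin d =>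
            x (Sum.inl p.1 : Fin n ⊕ I) a * (if p.2 = b then (1:ℝ) else 0)
              - x (Sum.inl p.1 : Fin n ⊕ I) b * (if p.2 = a then 1 else 0))) c := by
          simp only [Matrix.mulVec, dotProduct, Fintype.sum_prod_type, mul_sub,
            mul_ite, mul_one, mul_zero, Finset.sum_sub_distrib, Fintype.sum_ite_eq']
      _ = 0 := h1
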